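/- Let E be a Banach space and 𝓕 = ((a_m, b_m*))_{m≥1} a Besselian Schauder frame for E with Besselian constant L_𝓕. Then the map x ↦ ‖x‖^Bess_{E,𝓕} := sup_{‖f*‖_{E*} ≤ 1} ∑_{m=1}^∞ |b_m*(x) f*(a_m)| is a norm on E equivalent to the original norm, and satisfies ‖x‖_E ≤ ‖x‖^Bess_{E,𝓕} ≤ L_𝓕 ‖x‖_E for every x ∈ E. -/

import Mathlib

open Filter Finset

variable {𝕂 : Type*} [RCLike 𝕂] {E : Type*} [NormedAddCommGroup E] [NormedSpace 𝕂 E]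

/-- `((a_m, b_m*))` is a Schauder frame for `E`: `x = ∑ b_m*(x) a_m` for all `x`. -/
def IsSchauderFrame (a : ℕ → E) (b : ℕ → E →L[𝕂] 𝕂) : Prop :=
  ∀ x : E, Tendsto (fun M : ℕ => ∑ m ∈ Finset.range M, b m x • a m) atTop (nhds x)

/-- `((a_m, b_m*))` is a Besselian Schauder frame for `E`. -/
def IsBesselianSchauderFrame (a : ℕ → E) (b : ℕ → E →L[𝕂] 𝕂) : Prop :=
  IsSchauderFrame a b ∧
    ∃ B : ℝ, 0 < B ∧ ∀ (x : E) (f : E →L[𝕂] 𝕂),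
      Summable (fun m : ℕ => ‖b m x‖ * ‖f (a m)‖) ∧
      ∑' m : ℕ, ‖b m x‖ * ‖f (a m)‖ ≤ B * ‖x‖ * ‖f‖

/-- The Besselian constant `L_𝓕` of the frame `𝓕 = ((a_m, b_m*))`. -/
noncomputable def besselianConst (a : ℕ → E) (b : ℕ → E →L[𝕂] 𝕂) : ℝ :=
  ⨆ p : {x : E // ‖x‖ ≤ 1} × {f : E →L[𝕂] 𝕂 // ‖f‖ ≤ 1},
    ∑' m : ℕ, ‖b m p.1.1‖ * ‖p.2.1 (a m)‖

/-- The Besselian norm `‖x‖^Bess_{E,𝓕} = sup_{‖f*‖ ≤ 1} ∑_m |b_m*(x) f*(a_m)|`. -/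
noncomputable def bessNorm (a : ℕ → E) (b : ℕ → E →L[𝕂] 𝕂) (x : E) : ℝ :=
  ⨆ f : {f : E →L[𝕂] 𝕂 // ‖f‖ ≤ 1}, ∑' m : ℕ, ‖b m x‖ * ‖f.1 (a m)‖

/-- If `𝓕 = ((a_m, b_m*))` is a Besselian Schauder frame for a Banach
space `E` with Besselian constant `L_𝓕`, then `‖·‖^Bess_{E,𝓕}` is a norm on `E`,
equivalent to the original norm: `‖x‖ ≤ ‖x‖^Bess ≤ L_𝓕 ‖x‖` for all `x`. -/
theorem bessNorm_is_equivalent_norm [CompleteSpace E]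
    (a : ℕ → E) (b : ℕ → E →L[𝕂] 𝕂) (hF : IsBesselianSchauderFrame a b) :
    (∀ x y : E, bessNorm a b (x + y) ≤ bessNorm a b x + bessNorm a b y) ∧
    (∀ (c : 𝕂) (x : E), bessNorm a b (c • x) = ‖c‖ * bessNorm a b x) ∧
    (∀ x : E, bessNorm a b x = 0 ↔ x = 0) ∧
    (∀ x : E, ‖x‖ ≤ bessNorm a b x ∧ bessNorm a b x ≤ besselianConst a b * ‖x‖) := by

  obtain ⟨hSF, B, hB, hbd⟩ := hF
  have hne : Nonempty {f : E →L[𝕂] 𝕂 // ‖f‖ ≤ 1} := ⟨⟨0, by simp⟩⟩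
  -- boundedness of the family defining bessNorm
  have hbdd : ∀ x : E, BddAbove (Set.range fun f : {f : E →L[𝕂] 𝕂 // ‖f‖ ≤ 1} =>
      ∑' m : ℕ, ‖b m x‖ * ‖f.1 (a m)‖) := by
    intro x
    refine ⟨B * ‖x‖, ?_⟩
    rintro _ ⟨f, rfl⟩
    calc ∑' m : ℕ, ‖b m x‖ * ‖f.1 (a m)‖ ≤ B * ‖x‖ * ‖f.1‖ := (hbd x f.1).2
      _ ≤ B * ‖x‖ * 1 := by
          have : (0:ℝ) ≤ B * ‖x‖ := mul_nonneg hB.le (norm_nonneg x)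
          nlinarith [f.2]
      _ = B * ‖x‖ := mul_one _
  have hle : ∀ (x : E) (f : {f : E →L[𝕂] 𝕂 // ‖f‖ ≤ 1}),
      (∑' m : ℕ, ‖b m x‖ * ‖f.1 (a m)‖) ≤ bessNorm a b x := fun x f =>
    le_ciSup (hbdd x) f
  -- scaling of the sums
  have hscale : ∀ (c : 𝕂) (x : E) (f : E →L[𝕂] 𝕂),
      (∑' m : ℕ, ‖b m (c • x)‖ * ‖f (a m)‖) = ‖c‖ * ∑' m : ℕ, ‖b m x‖ * ‖f (a m)‖ := by
    intro c x f
    rw [← tsum_mul_left]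
    refine tsum_congr fun m => ?_
    rw [map_smul, smul_eq_mul, norm_mul, mul_assoc]
  -- lower bound ‖x‖ ≤ bessNorm
  have hlower : ∀ x : E, ‖x‖ ≤ bessNorm a b x := by
    intro x
    rcases eq_or_ne x 0 with rfl | hx
    · have h0 : (∑' m : ℕ, ‖b m (0:E)‖ * ‖((0 : E →L[𝕂] 𝕂)) (a m)‖) ≤ bessNorm a b 0 :=
        hle 0 ⟨0, by simp⟩
      simpa using h0
    · obtain ⟨f, hf1, hfx⟩ := exists_dual_vector 𝕂 x (norm_ne_zero_iff.mpr hx)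
      have hsum : Summable fun m : ℕ => b m x * f (a m) := by
        refine Summable.of_norm ?_
        simpa [norm_mul] using (hbd x f).1
      have htend1 : Tendsto (fun M : ℕ => ∑ m ∈ Finset.range M, b m x * f (a m)) atTop
          (nhds (∑' m : ℕ, b m x * f (a m))) := hsum.hasSum.tendsto_sum_nat
      have htend2 : Tendsto (fun M : ℕ => ∑ m ∈ Finset.range M, b m x * f (a m)) atTop
          (nhds (f x)) := by
        have := (f.continuous.tendsto x).comp (hSF x)
        simpa [Function.comp_def, map_sum, map_smul, smul_eq_mul] using this
      have hfx2 : f x = ∑' m : ℕ, b m x * f (a m) := tendsto_nhds_unique htend2 htend1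
      have : ‖x‖ = ‖f x‖ := by rw [hfx]; simp
      rw [this, hfx2]
      calc ‖∑' m : ℕ, b m x * f (a m)‖ ≤ ∑' m : ℕ, ‖b m x * f (a m)‖ :=
            norm_tsum_le_tsum_norm (by simpa [norm_mul] using (hbd x f).1)
        _ = ∑' m : ℕ, ‖b m x‖ * ‖f (a m)‖ := by simp [norm_mul]
        _ ≤ bessNorm a b x := hle x ⟨f, hf1.le⟩
    -- done
  refine ⟨?_, ?_, ?_, ?_⟩
  · -- triangle inequality
    intro x y
    refine ciSup_le fun f => ?_
    have h1 : (∑' m : ℕ, ‖b m (x + y)‖ * ‖f.1 (a m)‖) ≤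
        ∑' m : ℕ, (‖b m x‖ * ‖f.1 (a m)‖ + ‖b m y‖ * ‖f.1 (a m)‖) := by
      refine Summable.tsum_le_tsum (fun m => ?_) (hbd (x + y) f.1).1 (((hbd x f.1).1).add (hbd y f.1).1)
      have : ‖b m (x + y)‖ ≤ ‖b m x‖ + ‖b m y‖ := by
        rw [map_add]; exact norm_add_le _ _
      nlinarith [norm_nonneg (f.1 (a m))]
    rw [Summable.tsum_add (hbd x f.1).1 (hbd y f.1).1] at h1
    exact h1.trans (add_le_add (hle x f) (hle y f))
  · -- homogeneity
    intro c x
    unfold bessNorm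
    rw [Real.mul_iSup_of_nonneg (norm_nonneg c)]
    exact iSup_congr fun f => hscale c x f.1
  · -- norm zero iff
    intro x
    constructor
    · intro h
      have := hlower x
      rw [h] at this
      exact norm_le_zero_iff.mp this
    · rintro rfl
      have : ∀ f : {f : E →L[𝕂] 𝕂 // ‖f‖ ≤ 1},
          (∑' m : ℕ, ‖b m (0:E)‖ * ‖f.1 (a m)‖) = 0 := by intro f; simp
      unfold bessNorm
      simp only [this]
      exact ciSup_const
  · -- equivalence
    intro x
    refine ⟨hlower x, ?_⟩
    have hbddP : BddAbove (Set.range fun p : {x : E // ‖x‖ ≤ 1} × {f : E →L[𝕂] 𝕂 // ‖f‖ ≤ 1} =>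
        ∑' m : ℕ, ‖b m p.1.1‖ * ‖p.2.1 (a m)‖) := by
      refine ⟨B, ?_⟩
      rintro _ ⟨p, rfl⟩
      calc ∑' m : ℕ, ‖b m p.1.1‖ * ‖p.2.1 (a m)‖ ≤ B * ‖p.1.1‖ * ‖p.2.1‖ :=
            (hbd p.1.1 p.2.1).2
        _ ≤ B * 1 * 1 := by
            gcongr
            · exact p.1.2
            · exact p.2.2
        _ = B := by ring
    refine ciSup_le fun f => ?_
    rcases eq_or_ne x 0 with rfl | hx
    · simp
    · have hxpos : (0:ℝ) < ‖x‖ := norm_pos_iff.mpr hx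
      set u : E := ((‖x‖ : 𝕂))⁻¹ • x with hu
      have hunorm : ‖u‖ ≤ 1 := by
        rw [hu, norm_smul, norm_inv]
        simp [abs_of_nonneg hxpos.le, inv_mul_cancel₀ hxpos.ne']
      have hxu : x = (‖x‖ : 𝕂) • u := by
        rw [hu, smul_smul, mul_inv_cancel₀ (RCLike.ofReal_ne_zero.mpr hxpos.ne'), one_smul]
      have : (∑' m : ℕ, ‖b m x‖ * ‖f.1 (a m)‖) =
          ‖x‖ * ∑' m : ℕ, ‖b m u‖ * ‖f.1 (a m)‖ := by
        conv_lhs => rw [hxu]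
        rw [hscale]
        simp
      rw [this, mul_comm (besselianConst a b) ‖x‖]
      refine mul_le_mul_of_nonneg_left ?_ hxpos.le
      exact le_ciSup hbddP (⟨u, hunorm⟩, f)
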